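/- For an m×n interval matrix 𝐀 with midpoint A_c, radius A_Δ, and an interval vector 𝐛 with midpoint b_c, radius b_Δ: a vector x ∈ ℝⁿ with x ≥ 0 is a weak solution of 𝐀x = 𝐛 (i.e., Ax = b for some A ∈ 𝐀, b ∈ 𝐛) if and only if (A_c − A_Δ)x ≤ b_c + b_Δ and (A_c + A_Δ)x ≥ b_c − b_Δ. -/

import Mathlib

/-- Weak solutions of `𝐀x = 𝐛` with `x ≥ 0`:
`x ≥ 0` is a weak solution iff `(A_c − A_Δ)x ≤ b_c + b_Δ` and `(A_c + A_Δ)x ≥ b_c − b_Δ`. -/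
theorem weak_solution_equations_nonneg_iff
    {m n : ℕ}
    (Ac AΔ : Matrix (Fin m) (Fin n) ℝ)
    (bc bΔ : Fin m → ℝ)
    (hAΔ : ∀ i j, 0 ≤ AΔ i j) (hbΔ : ∀ i, 0 ≤ bΔ i)
    (x : Fin n → ℝ) (hx : ∀ j, 0 ≤ x j) :
    (∃ A : Matrix (Fin m) (Fin n) ℝ, (∀ i j, |A i j - Ac i j| ≤ AΔ i j) ∧
      ∃ b : Fin m → ℝ, (∀ i, |b i - bc i| ≤ bΔ i) ∧ A.mulVec x = b)
    ↔
    ((∀ i, ((Ac - AΔ).mulVec x) i ≤ bc i + bΔ i) ∧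
     (∀ i, ((Ac + AΔ).mulVec x) i ≥ bc i - bΔ i)) := by
  have hsub : ∀ i, ((Ac - AΔ).mulVec x) i = (Ac.mulVec x) i - (AΔ.mulVec x) i := by
    intro i
    simp [Matrix.sub_mulVec]
  have hadd : ∀ i, ((Ac + AΔ).mulVec x) i = (Ac.mulVec x) i + (AΔ.mulVec x) i := by
    intro i
    simp [Matrix.add_mulVec]
  constructor
  · rintro ⟨A, hA, b, hb, hAx⟩
    have hle : ∀ i, ((Ac - AΔ).mulVec x) i ≤ (A.mulVec x) i := by
      intro i
      simp only [Matrix.mulVec, dotProduct]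
      apply Finset.sum_le_sum
      intro j _
      have h1 := (abs_le.mp (hA i j)).1
      have : (Ac - AΔ) i j ≤ A i j := by
        simp only [Matrix.sub_apply]; linarith
      exact mul_le_mul_of_nonneg_right this (hx j)
    have hge : ∀ i, (A.mulVec x) i ≤ ((Ac + AΔ).mulVec x) i := by
      intro i
      simp only [Matrix.mulVec, dotProduct]
      apply Finset.sum_le_sum
      intro j _
      have h1 := (abs_le.mp (hA i j)).2
      have : A i j ≤ (Ac + AΔ) i j := by
        simp only [Matrix.add_apply]; linarith
      exact mul_le_mul_of_nonneg_right this (hx j)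
    constructor
    · intro i
      have := (abs_le.mp (hb i)).2
      have hbi : (A.mulVec x) i = b i := congrFun hAx i
      have := hle i
      linarith
    · intro i
      have := (abs_le.mp (hb i)).1
      have hbi : (A.mulVec x) i = b i := congrFun hAx i
      have := hge i
      linarith
  · rintro ⟨h1, h2⟩
    set S : Fin m → ℝ := fun i => (AΔ.mulVec x) i with hS
    have hSnn : ∀ i, 0 ≤ S i := by
      intro i
      simp only [hS, Matrix.mulVec, dotProduct]
      apply Finset.sum_nonneg
      intro j _
      exact mul_nonneg (hAΔ i j) (hx j)
    set c : Fin m → ℝ := fun i => (Ac.mulVec x) i with hc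
    -- target b value
    set t : Fin m → ℝ := fun i => max (c i - S i) (bc i - bΔ i) with ht
    have htL : ∀ i, c i - S i ≤ t i := fun i => le_max_left _ _
    have htU : ∀ i, t i ≤ c i + S i := by
      intro i
      apply max_le
      · linarith [hSnn i]
      · have := h2 i; rw [hadd i] at this; exact this
    have htb1 : ∀ i, bc i - bΔ i ≤ t i := fun i => le_max_right _ _
    have htb2 : ∀ i, t i ≤ bc i + bΔ i := by
      intro i
      apply max_le
      · have := h1 i; rw [hsub i] at this; exact this
      · linarith [hbΔ i]
    set θ : Fin m → ℝ := fun i => if S i = 0 then 0 else (t i - c i) / S i with hθ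
    have hθle : ∀ i, |θ i| ≤ 1 := by
      intro i
      by_cases hS0 : S i = 0
      · simp [hθ, hS0]
      · have hSpos : 0 < S i := lt_of_le_of_ne (hSnn i) (Ne.symm hS0)
        simp only [hθ, hS0, if_false]
        rw [abs_div, abs_of_pos hSpos, div_le_one hSpos, abs_le]
        constructor <;> [linarith [htL i]; linarith [htU i]]
    refine ⟨fun i j => Ac i j + θ i * AΔ i j, ?_, t, ?_, ?_⟩
    · intro i j
      have : |Ac i j + θ i * AΔ i j - Ac i j| = |θ i| * AΔ i j := by
        rw [add_sub_cancel_left, abs_mul, abs_of_nonneg (hAΔ i j)]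
      rw [this]
      calc |θ i| * AΔ i j ≤ 1 * AΔ i j :=
            mul_le_mul_of_nonneg_right (hθle i) (hAΔ i j)
        _ = AΔ i j := one_mul _
    · intro i
      rw [abs_le]
      constructor <;> [linarith [htb1 i]; linarith [htb2 i]]
    · funext i
      have hmv : (Matrix.mulVec (fun i j => Ac i j + θ i * AΔ i j) x) i
          = c i + θ i * S i := by
        simp only [Matrix.mulVec, dotProduct, hc, hS]
        rw [Finset.mul_sum, ← Finset.sum_add_distrib]
        apply Finset.sum_congr rfl
        intro j _
        ring
      rw [hmv]
      by_cases hS0 : S i = 0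
      · have : t i = c i := le_antisymm (by linarith [htU i]) (by linarith [htL i])
        simp [hθ, hS0, this]
      · simp only [hθ, hS0, if_false]
        field_simp
        ring
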